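/- For every nonnegative integer n with n ≠ 2, there exist a set Ω and a set C of n subsets of Ω such that the smallest patchwork on Ω containing C has exactly 2^(2^n − 1) + 1 elements. -/

import Mathlib

/-- A subset `A` is convex with respect to an order relation `le` if whenever
`p ≤ q ≤ r` with `p ∈ A` and `r ∈ A`, also `q ∈ A`. -/
def IsConvex {Ω : Type*} (le : Ω → Ω → Prop) (A : Set Ω) : Prop :=
  ∀ p q r : Ω, le p q → le q r → p ∈ A → r ∈ A → q ∈ A

/-- Two subsets overlap if they have nonempty intersection and neither contains the other. -/
def Overlap {Ω : Type*} (A B : Set Ω) : Prop :=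
  (A ∩ B).Nonempty ∧ ¬ A ⊆ B ∧ ¬ B ⊆ A

/-- A patchwork on `Ω` is a set of subsets of `Ω` containing `∅` and `Ω` and closed under
intersection, union and difference of overlapping pairs. -/
def IsPatchwork {Ω : Type*} (P : Set (Set Ω)) : Prop :=
  ∅ ∈ P ∧ Set.univ ∈ P ∧
    ∀ A ∈ P, ∀ B ∈ P, Overlap A B → A ∩ B ∈ P ∧ A ∪ B ∈ P ∧ A \ B ∈ P

/-- A member of a patchwork is autonomous if it is nonempty and overlaps no member. -/
def Autonomous {Ω : Type*} (P : Set (Set Ω)) (A : Set Ω) : Prop :=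
  A ∈ P ∧ A.Nonempty ∧ ∀ B ∈ P, ¬ Overlap A B

/-- The cohort under `B`: the maximal autonomous proper subsets of `B`. -/
def Cohort {Ω : Type*} (P : Set (Set Ω)) (B : Set Ω) : Set (Set Ω) :=
  {A | Autonomous P A ∧ A ⊂ B ∧ ∀ C, Autonomous P C → C ⊂ B → A ⊆ C → A = C}

/-- Two members of a patchwork are adjacent if they are disjoint and their union is a member. -/
def Adjacent {Ω : Type*} (P : Set (Set Ω)) (A B : Set Ω) : Prop :=
  Disjoint A B ∧ A ∪ B ∈ P

/-- The smallest patchwork on `Ω` containing `C`. -/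
def patchworkClosure {Ω : Type*} (C : Set (Set Ω)) : Set (Set Ω) :=
  ⋂₀ {P | IsPatchwork P ∧ C ⊆ P}

section helper
variable {Ω : Type*}

lemma isPatchwork_closure (C : Set (Set Ω)) : IsPatchwork (patchworkClosure C) := by
  refine ⟨?_, ?_, ?_⟩
  · exact fun P hP => hP.1.1
  · exact fun P hP => hP.1.2.1
  · intro A hA B hB hov
    refine ⟨fun P hP => (hP.1.2.2 A (hA P hP) B (hB P hP) hov).1,
      fun P hP => (hP.1.2.2 A (hA P hP) B (hB P hP) hov).2.1,
      fun P hP => (hP.1.2.2 A (hA P hP) B (hB P hP) hov).2.2⟩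

lemma subset_pclosure (C : Set (Set Ω)) : C ⊆ patchworkClosure C :=
  fun A hA P hP => hP.2 hA

lemma closure_subset {C P : Set (Set Ω)} (hP : IsPatchwork P) (hCP : C ⊆ P) :
    patchworkClosure C ⊆ P :=
  Set.sInter_subset_of_mem ⟨hP, hCP⟩

end helper

section construction

/-- the generating sets -/
def Agen (n : ℕ) (i : Fin n) : Set (Finset (Fin n)) := {x | i ∈ x}

/-- the "interval" `[z, univ]` -/
def upInt {n : ℕ} (z : Finset (Fin n)) : Set (Finset (Fin n)) := {x | z ⊆ x}

/-- the "band" `[z, Jᶜ]` -/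
def band {n : ℕ} (z J : Finset (Fin n)) : Set (Finset (Fin n)) := {x | z ⊆ x ∧ ∀ j ∈ J, j ∉ x}

variable {n : ℕ} {P : Set (Set (Finset (Fin n)))}

lemma upInt_mem (hP : IsPatchwork P) (hA : ∀ i, Agen n i ∈ P) {z : Finset (Fin n)}
    (hz : z.Nonempty) : upInt z ∈ P := by
  induction hz using Finset.Nonempty.cons_induction with
  | singleton i =>
      have : upInt {i} = Agen n i := by
        ext x; simp [upInt, Agen]
      rw [this]; exact hA i
  | cons i z hi hz ih =>
      have key : upInt (Finset.cons i z hi) = upInt z ∩ Agen n i := by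
        ext x; simp [upInt, Agen, Finset.insert_subset_iff, and_comm]
      rw [key]
      obtain ⟨k, hk⟩ := hz
      refine (hP.2.2 _ ih _ (hA i) ⟨⟨Finset.cons i z hi, ?_, ?_⟩, ?_, ?_⟩).1
      · exact fun j hj => Finset.subset_cons _ hj
      · simp [Agen]
      · intro hsub
        have : i ∈ z := hsub (le_refl z)
        exact hi this
      · intro hsub
        have h1 : z ⊆ ({i} : Finset (Fin n)) := hsub (by simp [Agen])
        have := h1 hk
        simp at this
        exact hi (this ▸ hk)

lemma band_mem (hP : IsPatchwork P) (hA : ∀ i, Agen n i ∈ P) {z : Finset (Fin n)}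
    (hz : z.Nonempty) (J : Finset (Fin n)) (hzJ : Disjoint z J) : band z J ∈ P := by
  induction J using Finset.induction_on with
  | empty =>
      have : band z ∅ = upInt z := by ext x; simp [band, upInt]
      rw [this]; exact upInt_mem hP hA hz
  | @insert j J hj ih =>
      have hzJ' := hzJ
      have hjz : j ∉ z := fun h => (Finset.disjoint_left.mp hzJ') h (Finset.mem_insert_self j J)
      have hzJ2 : Disjoint z J := hzJ'.mono_right (Finset.subset_insert j J)
      have key : band z (insert j J) = band z J \ Agen n j := by
        ext x
        simp only [band, Set.mem_setOf_eq, Set.mem_diff, Agen, Finset.mem_insert]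
        constructor
        · rintro ⟨h1, h2⟩
          exact ⟨⟨h1, fun k hk => h2 k (Or.inr hk)⟩, h2 j (Or.inl rfl)⟩
        · rintro ⟨⟨h1, h2⟩, h3⟩
          refine ⟨h1, fun k hk => ?_⟩
          rcases hk with rfl | hk
          · exact h3
          · exact h2 k hk
      rw [key]
      obtain ⟨k, hk⟩ := hz
      refine (hP.2.2 _ (ih hzJ2) _ (hA j) ⟨⟨insert j z, ⟨?_, ?_⟩, ?_⟩, ?_, ?_⟩).2.2
      · exact Finset.subset_insert j z
      · intro k' hk'
        simp only [Finset.mem_insert]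
        push_neg
        exact ⟨fun h => hj (h ▸ hk'), fun h => (Finset.disjoint_left.mp hzJ2) h hk'⟩
      · simp [Agen]
      · intro hsub
        have hzmem : z ∈ band z J :=
          ⟨le_refl z, fun k' hk' hkx => (Finset.disjoint_left.mp hzJ2) hkx hk'⟩
        exact hjz (hsub hzmem)
      · intro hsub
        have h1 : z ⊆ ({j} : Finset (Fin n)) := (hsub (by simp [Agen] : ({j} : Finset (Fin n)) ∈ Agen n j)).1
        have := h1 hk
        simp at this
        exact hjz (this ▸ hk)

lemma singleton_mem (hP : IsPatchwork P) (hA : ∀ i, Agen n i ∈ P) {z : Finset (Fin n)}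
    (hz : z.Nonempty) : ({z} : Set (Finset (Fin n))) ∈ P := by
  have key : ({z} : Set (Finset (Fin n))) = band z zᶜ := by
    ext x
    simp only [Set.mem_singleton_iff, band, Set.mem_setOf_eq, Finset.mem_compl]
    constructor
    · rintro rfl; exact ⟨le_refl _, fun j hj hjx => hj hjx⟩
    · rintro ⟨h1, h2⟩
      apply Finset.Subset.antisymm _ h1
      intro k hk
      by_contra hkz
      exact h2 k hkz hk
  rw [key]
  exact band_mem hP hA hz _ (by simp [Finset.disjoint_left])

open Fin.NatCast Fin.CommRing in
lemma pair_univ_mem (hP : IsPatchwork P) (hA : ∀ i, Agen n i ∈ P) {z : Finset (Fin n)}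
    (hz : z.Nonempty) : ({z, Finset.univ} : Set (Finset (Fin n))) ∈ P := by
  obtain ⟨k0, hk0⟩ := hz
  match hcard : zᶜ.card with
  | 0 =>
      have hzu : z = Finset.univ := by
        have h0 : zᶜ = ∅ := Finset.card_eq_zero.mp hcard
        apply Finset.eq_univ_iff_forall.mpr
        intro i
        by_contra h
        have hmem : i ∈ zᶜ := Finset.mem_compl.mpr h
        rw [h0] at hmem
        exact absurd hmem (Finset.notMem_empty i)
      rw [hzu]
      simpa using singleton_mem hP hA (⟨k0, Finset.mem_univ k0⟩ : (Finset.univ : Finset (Fin n)).Nonempty)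
  | 1 =>
      obtain ⟨j, hj⟩ := Finset.card_eq_one.mp hcard
      have key : ({z, Finset.univ} : Set (Finset (Fin n))) = upInt z := by
        ext x
        simp only [Set.mem_insert_iff, Set.mem_singleton_iff, upInt, Set.mem_setOf_eq]
        constructor
        · rintro (rfl | rfl)
          · exact subset_rfl
          · exact Finset.subset_univ z
        · intro hzx
          by_cases hjx : j ∈ x
          · right
            apply Finset.eq_univ_iff_forall.mpr
            intro i
            by_cases hiz : i ∈ z
            · exact hzx hiz
            · have : i ∈ zᶜ := Finset.mem_compl.mpr hiz
              rw [hj] at this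
              simp at this
              exact this ▸ hjx
          · left
            apply (Finset.Subset.antisymm · hzx)
            intro i hix
            by_contra hiz
            have : i ∈ zᶜ := Finset.mem_compl.mpr hiz
            rw [hj] at this
            simp at this
            exact hjx (this ▸ hix)
      rw [key]
      exact upInt_mem hP hA ⟨k0, hk0⟩
  | (k + 2) =>
      -- the cycle construction
      have e : {x // x ∈ zᶜ} ≃ Fin (k + 2) := (zᶜ.equivFin).trans (finCongr hcard)
      set j : Fin (k + 2) → Fin n := fun a => (e.symm a : Fin n) with hjdef
      have hjc : ∀ a, j a ∈ zᶜ := fun a => (e.symm a).2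
      have hjz : ∀ a, j a ∉ z := fun a => Finset.mem_compl.mp (hjc a)
      have hjinj : Function.Injective j := fun a b h =>
        e.symm.injective (Subtype.ext h)
      have hjsurj : ∀ i ∈ zᶜ, ∃ a, j a = i := fun i hi => ⟨e ⟨i, hi⟩, by simp [hjdef]⟩
      set M : ℕ → Set (Finset (Fin n)) :=
        fun i => {x | z ⊆ x ∧ ∀ a : Fin (k + 2), (a : ℕ) < i → j a ∈ x → j (a + 1) ∈ x} with hMdef
      have hzM : ∀ i, z ∈ M i := fun i => ⟨le_refl z, fun a _ hax => absurd hax (hjz a)⟩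
      have hja_ne : ∀ a : Fin (k+2), j (a + 1) ≠ j a := by
        intro a h
        have h2 : a + 1 = a + 0 := by simpa using hjinj h
        have h4 := congrArg Fin.val (add_left_cancel h2)
        simp at h4
      have main : ∀ i, i ≤ k + 2 → M i ∈ P := by
        intro i hi
        induction i with
        | zero =>
            have : M 0 = upInt z := by
              ext x; simp [hMdef, upInt]
            rw [this]; exact upInt_mem hP hA ⟨k0, hk0⟩
        | succ i ih =>
            have hi' : i < k + 2 := hi
            set a0 : Fin (k + 2) := ⟨i, hi'⟩ with ha0
            have hY : band {j a0} {j (a0 + 1)} ∈ P := by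
              apply band_mem hP hA (Finset.singleton_nonempty _)
              exact Finset.disjoint_singleton.mpr fun h => hja_ne a0 h.symm
            have hYmem : ∀ x : Finset (Fin n), x ∈ band {j a0} {j (a0+1)} ↔
                (j a0 ∈ x ∧ j (a0+1) ∉ x) := by
              intro x
              simp [band, Finset.singleton_subset_iff]
            have hkey : M (i + 1) = M i \ band {j a0} {j (a0 + 1)} := by
              ext x
              simp only [hMdef, Set.mem_setOf_eq, Set.mem_diff, hYmem]
              constructor
              · rintro ⟨h1, h2⟩
                refine ⟨⟨h1, fun a ha => h2 a (Nat.lt_succ_of_lt ha)⟩, ?_⟩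
                push_neg
                exact h2 a0 (Nat.lt_succ_self i)
              · rintro ⟨⟨h1, h2⟩, h3⟩
                push_neg at h3
                refine ⟨h1, fun a ha => ?_⟩
                rcases Nat.lt_succ_iff_lt_or_eq.mp ha with ha' | ha'
                · exact h2 a ha'
                · have : a = a0 := Fin.ext ha'
                  rw [this]; exact h3
            rw [hkey]
            refine (hP.2.2 _ (ih (Nat.le_of_succ_le hi)) _ hY ⟨⟨insert (j a0) z, ?_, ?_⟩, ?_, ?_⟩).2.2
            · -- insert (j a0) z ∈ M i
              refine ⟨Finset.subset_insert _ z, fun a ha hax => ?_⟩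
              rcases Finset.mem_insert.mp hax with h | h
              · have : a = a0 := hjinj h
                rw [this] at ha
                exact absurd ha (lt_irrefl i)
              · exact absurd h (hjz a)
            · rw [hYmem]
              constructor
              · exact Finset.mem_insert_self _ _
              · intro h
                rcases Finset.mem_insert.mp h with h | h
                · exact hja_ne a0 h
                · exact hjz _ h
            · intro hsub
              have := (hYmem z).mp (hsub (hzM i))
              exact hjz a0 this.1
            · intro hsub
              have hmem : ({j a0} : Finset (Fin n)) ∈ band {j a0} {j (a0+1)} := by
                rw [hYmem]
                refine ⟨Finset.mem_singleton_self _, fun h => hja_ne a0 (Finset.mem_singleton.mp h)⟩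
              have := (hsub hmem).1 hk0
              rw [Finset.mem_singleton] at this
              exact hjz a0 (this ▸ hk0)
      have final : ({z, Finset.univ} : Set (Finset (Fin n))) = M (k + 2) := by
        ext x
        simp only [Set.mem_insert_iff, Set.mem_singleton_iff]
        constructor
        · rintro (rfl | rfl)
          · exact hzM _
          · exact ⟨Finset.subset_univ z, fun a _ _ => Finset.mem_univ _⟩
        · rintro ⟨h1, h2⟩
          by_cases hex : ∃ a, j a ∈ x
          · right
            obtain ⟨a1, ha1⟩ := hex
            have step : ∀ d : ℕ, j (a1 + (d : Fin (k+2))) ∈ x := by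
              intro d
              induction d with
              | zero => simpa using ha1
              | succ d ihd =>
                  have : a1 + ((d + 1 : ℕ) : Fin (k+2)) = (a1 + (d : Fin (k+2))) + 1 := by
                    push_cast; ring
                  rw [this]
                  exact h2 _ (Fin.is_lt _) ihd
            have hall : ∀ b : Fin (k+2), j b ∈ x := by
              intro b
              have hb : a1 + (((b - a1 : Fin (k+2)) : ℕ) : Fin (k+2)) = b := by
                rw [Fin.cast_val_eq_self]; ring
              have := step ((b - a1 : Fin (k+2)) : ℕ)
              rwa [hb] at this
            apply Finset.eq_univ_iff_forall.mpr
            intro i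
            by_cases hiz : i ∈ z
            · exact h1 hiz
            · obtain ⟨a, ha⟩ := hjsurj i (Finset.mem_compl.mpr hiz)
              exact ha ▸ hall a
          · left
            push_neg at hex
            apply (Finset.Subset.antisymm · h1)
            intro i hix
            by_contra hiz
            obtain ⟨a, ha⟩ := hjsurj i (Finset.mem_compl.mpr hiz)
            exact hex a (ha ▸ hix)
      rw [final]
      exact main (k + 2) (le_refl _)

lemma bandX_mem_iff {a b : Fin n} (x : Finset (Fin n)) :
    x ∈ band {a} {b} ↔ (a ∈ x ∧ b ∉ x) := by
  simp [band, Finset.singleton_subset_iff]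

lemma Wchain_mem (hP : IsPatchwork P) (hA : ∀ i, Agen n i ∈ P) (i : Fin n) :
    ∀ F : Finset (Fin n), F.Nonempty → i ∉ F →
      {x : Finset (Fin n) | i ∈ x ∧ ∃ j ∈ F, j ∉ x} ∈ P := by
  intro F hF
  induction hF using Finset.Nonempty.cons_induction with
  | singleton j =>
      intro hiF
      have hij : i ≠ j := by simpa using hiF
      have key : {x : Finset (Fin n) | i ∈ x ∧ ∃ j' ∈ ({j} : Finset (Fin n)), j' ∉ x}
          = band {i} {j} := by
        ext x
        simp [bandX_mem_iff]
      rw [key]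
      exact band_mem hP hA (Finset.singleton_nonempty i) _
        (Finset.disjoint_singleton.mpr hij)
  | cons j' F hj' hF ih =>
      intro hiF
      have hij' : i ≠ j' := fun h => hiF (h ▸ Finset.mem_cons_self j' F)
      have hiF2 : i ∉ F := fun h => hiF (Finset.mem_cons_of_mem h)
      obtain ⟨j0, hj0⟩ := hF
      have hij0 : i ≠ j0 := fun h => hiF2 (h ▸ hj0)
      have key : {x : Finset (Fin n) | i ∈ x ∧ ∃ jj ∈ Finset.cons j' F hj', jj ∉ x}
          = {x : Finset (Fin n) | i ∈ x ∧ ∃ jj ∈ F, jj ∉ x} ∪ band {i} {j'} := by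
        ext x
        simp only [Set.mem_setOf_eq, Set.mem_union, bandX_mem_iff, Finset.mem_cons]
        constructor
        · rintro ⟨h1, jj, (rfl | hjj), h3⟩
          · exact Or.inr ⟨h1, h3⟩
          · exact Or.inl ⟨h1, jj, hjj, h3⟩
        · rintro (⟨h1, jj, hjj, h3⟩ | ⟨h1, h3⟩)
          · exact ⟨h1, jj, Or.inr hjj, h3⟩
          · exact ⟨h1, j', Or.inl rfl, h3⟩
      rw [key]
      have hband : band {i} {j'} ∈ P := band_mem hP hA (Finset.singleton_nonempty i) _
        (Finset.disjoint_singleton.mpr hij')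
      refine (hP.2.2 _ (ih hiF2) _ hband ⟨⟨{i}, ⟨?_, ?_⟩, ?_⟩, ?_, ?_⟩).2.1
      · exact Finset.mem_singleton_self i
      · exact ⟨j0, hj0, fun h => hij0 (Finset.mem_singleton.mp h).symm⟩
      · rw [bandX_mem_iff]
        exact ⟨Finset.mem_singleton_self i, fun h => hij' (Finset.mem_singleton.mp h).symm⟩
      · -- ¬ MF ⊆ band
        intro hsub
        have hmem : (Finset.univ.erase j0) ∈
            {x : Finset (Fin n) | i ∈ x ∧ ∃ jj ∈ F, jj ∉ x} := by
          refine ⟨Finset.mem_erase.mpr ⟨hij0, Finset.mem_univ i⟩, j0, hj0, by simp⟩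
        have := ((bandX_mem_iff _).mp (hsub hmem)).2
        simp only [Finset.mem_erase, Finset.mem_univ, and_true, not_not] at this
        exact hj' (this ▸ hj0)
      · -- ¬ band ⊆ MF
        intro hsub
        have hmem : (Finset.univ.erase j') ∈ band {i} {j'} := by
          rw [bandX_mem_iff]
          exact ⟨Finset.mem_erase.mpr ⟨hij', Finset.mem_univ i⟩, by simp⟩
        obtain ⟨-, jj, hjjF, hjjx⟩ := hsub hmem
        simp only [Finset.mem_erase, Finset.mem_univ, and_true, not_not] at hjjx
        exact hj' (hjjx ▸ hjjF)

lemma Wmem (hP : IsPatchwork P) (hA : ∀ i, Agen n i ∈ P) (i : Fin n) (hn2 : 2 ≤ n) :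
    {x : Finset (Fin n) | i ∈ x ∧ x ≠ Finset.univ} ∈ P := by
  haveI : Nontrivial (Fin n) := Fin.nontrivial_iff_two_le.mpr hn2
  obtain ⟨j, hj⟩ := exists_ne i
  have key : {x : Finset (Fin n) | i ∈ x ∧ x ≠ Finset.univ}
      = {x : Finset (Fin n) | i ∈ x ∧ ∃ jj ∈ Finset.univ.erase i, jj ∉ x} := by
    ext x
    simp only [Set.mem_setOf_eq, Finset.mem_erase, Finset.mem_univ, and_true]
    constructor
    · rintro ⟨h1, h2⟩
      refine ⟨h1, ?_⟩
      by_contra h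
      push_neg at h
      apply h2
      apply Finset.eq_univ_iff_forall.mpr
      intro k
      by_cases hk : k = i
      · exact hk ▸ h1
      · exact h k hk
    · rintro ⟨h1, jj, hjji, hjjx⟩
      exact ⟨h1, fun h => hjjx (h ▸ Finset.mem_univ jj)⟩
  rw [key]
  exact Wchain_mem hP hA i _ ⟨j, Finset.mem_erase.mpr ⟨hj, Finset.mem_univ j⟩⟩
    (fun h => (Finset.mem_erase.mp h).1 rfl)

lemma Tmem (hP : IsPatchwork P) (hA : ∀ i, Agen n i ∈ P) (hn : n ≠ 2) :
    {x : Finset (Fin n) | x ≠ ∅ ∧ x ≠ Finset.univ} ∈ P := by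
  rcases le_or_gt n 1 with hn1 | hn1
  · -- trivial: the set is empty
    have key : {x : Finset (Fin n) | x ≠ ∅ ∧ x ≠ Finset.univ} = ∅ := by
      ext x
      simp only [Set.mem_setOf_eq, Set.mem_empty_iff_false, iff_false, not_and, not_not]
      intro hx
      obtain ⟨k, hk⟩ := Finset.nonempty_iff_ne_empty.mpr hx
      apply Finset.eq_univ_iff_forall.mpr
      intro k'
      have : k' = k := by omega
      exact this ▸ hk
    rw [key]
    exact hP.1
  · have hn3 : 3 ≤ n := by omega
    have hn2 : 2 ≤ n := by omega
    have hcard_ne : ∀ (a b : Fin n), (insert a {b} : Finset (Fin n)) ≠ Finset.univ := by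
      intro a b h
      have h1 : (insert a {b} : Finset (Fin n)).card ≤ 2 := by
        apply le_trans (Finset.card_insert_le a {b})
        simp
      rw [h, Finset.card_univ, Fintype.card_fin] at h1
      omega
    have hsingle_ne : ∀ (a : Fin n), ({a} : Finset (Fin n)) ≠ Finset.univ := by
      intro a h
      have h1 := congrArg Finset.card h
      rw [Finset.card_univ, Fintype.card_fin, Finset.card_singleton] at h1
      omega
    have claim : ∀ F : Finset (Fin n), F.Nonempty →
        {x : Finset (Fin n) | (∃ i ∈ F, i ∈ x) ∧ x ≠ Finset.univ} ∈ P := by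
      intro F hF
      induction hF using Finset.Nonempty.cons_induction with
      | singleton i =>
          have key : {x : Finset (Fin n) | (∃ i' ∈ ({i} : Finset (Fin n)), i' ∈ x) ∧
              x ≠ Finset.univ} = {x : Finset (Fin n) | i ∈ x ∧ x ≠ Finset.univ} := by
            ext x; simp
          rw [key]
          exact Wmem hP hA i hn2
      | cons i' F hi' hF ih =>
          obtain ⟨j0, hj0⟩ := hF
          have hji : j0 ≠ i' := fun h => hi' (h ▸ hj0)
          have key : {x : Finset (Fin n) | (∃ i ∈ Finset.cons i' F hi', i ∈ x) ∧
              x ≠ Finset.univ}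
              = {x : Finset (Fin n) | (∃ i ∈ F, i ∈ x) ∧ x ≠ Finset.univ}
                ∪ {x : Finset (Fin n) | i' ∈ x ∧ x ≠ Finset.univ} := by
            ext x
            simp only [Set.mem_setOf_eq, Set.mem_union, Finset.mem_cons]
            constructor
            · rintro ⟨⟨i, (rfl | hiF), hix⟩, h2⟩
              · exact Or.inr ⟨hix, h2⟩
              · exact Or.inl ⟨⟨i, hiF, hix⟩, h2⟩
            · rintro (⟨⟨i, hiF, hix⟩, h2⟩ | ⟨h1, h2⟩)
              · exact ⟨⟨i, Or.inr hiF, hix⟩, h2⟩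
              · exact ⟨⟨i', Or.inl rfl, h1⟩, h2⟩
          rw [key]
          refine (hP.2.2 _ ih _ (Wmem hP hA i' hn2)
            ⟨⟨insert j0 {i'}, ⟨⟨j0, hj0, by simp⟩, hcard_ne j0 i'⟩, by simp, hcard_ne j0 i'⟩,
              ?_, ?_⟩).2.1
          · intro hsub
            have hmem : ({j0} : Finset (Fin n)) ∈
                {x : Finset (Fin n) | (∃ i ∈ F, i ∈ x) ∧ x ≠ Finset.univ} :=
              ⟨⟨j0, hj0, Finset.mem_singleton_self j0⟩, hsingle_ne j0⟩
            have := (hsub hmem).1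
            exact hji (Finset.mem_singleton.mp this).symm
          · intro hsub
            have hmem : ({i'} : Finset (Fin n)) ∈
                {x : Finset (Fin n) | i' ∈ x ∧ x ≠ Finset.univ} :=
              ⟨Finset.mem_singleton_self i', hsingle_ne i'⟩
            obtain ⟨⟨i, hiF, hix⟩, -⟩ := hsub hmem
            exact hi' ((Finset.mem_singleton.mp hix) ▸ hiF)
    have huniv : (Finset.univ : Finset (Fin n)).Nonempty :=
      ⟨⟨0, by omega⟩, Finset.mem_univ _⟩
    have key : {x : Finset (Fin n) | x ≠ ∅ ∧ x ≠ Finset.univ}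
        = {x : Finset (Fin n) | (∃ i ∈ (Finset.univ : Finset (Fin n)), i ∈ x) ∧
            x ≠ Finset.univ} := by
      ext x
      simp only [Set.mem_setOf_eq, Finset.mem_univ, true_and]
      rw [← Finset.nonempty_iff_ne_empty]
      rfl
    rw [key]
    exact claim Finset.univ huniv

lemma insertUniv_mem (hP : IsPatchwork P) (hA : ∀ i, Agen n i ∈ P) (hn1 : 1 ≤ n) :
    ∀ B : Finset (Finset (Fin n)), (↑B : Set (Finset (Fin n))) ⊆ {x | x ≠ ∅} →
      insert Finset.univ (↑B : Set (Finset (Fin n))) ∈ P := by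
  have hune : (Finset.univ : Finset (Fin n)).Nonempty := ⟨⟨0, by omega⟩, Finset.mem_univ _⟩
  intro B
  induction B using Finset.induction_on with
  | empty =>
      intro _
      have : insert Finset.univ ((↑(∅ : Finset (Finset (Fin n)))) : Set (Finset (Fin n)))
          = {Finset.univ} := by simp
      rw [this]
      exact singleton_mem hP hA hune
  | @insert y B hy ih =>
      intro hsub
      have hyS : y ≠ ∅ := by
        have : y ∈ (↑(insert y B) : Set (Finset (Fin n))) := by simp
        exact hsub this
      have hyne : y.Nonempty := Finset.nonempty_iff_ne_empty.mpr hyS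
      have hBsub : (↑B : Set (Finset (Fin n))) ⊆ {x | x ≠ ∅} := by
        intro x hx
        exact hsub (by simp only [Finset.coe_insert, Set.mem_insert_iff]; exact Or.inr hx)
      have hcoe : (↑(insert y B) : Set (Finset (Fin n))) = insert y ↑B := Finset.coe_insert y B
      by_cases hyu : y = Finset.univ
      · rw [hcoe, hyu, Set.insert_idem]
        exact ih hBsub
      · by_cases hBu : (↑B : Set (Finset (Fin n))) ⊆ {Finset.univ}
        · have key : insert Finset.univ (↑(insert y B) : Set (Finset (Fin n)))
              = {y, Finset.univ} := by
            rw [hcoe]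
            ext x
            simp only [Set.mem_insert_iff, Set.mem_singleton_iff]
            constructor
            · rintro (rfl | rfl | hx)
              · exact Or.inr rfl
              · exact Or.inl rfl
              · exact Or.inr (hBu hx)
            · rintro (rfl | rfl)
              · exact Or.inr (Or.inl rfl)
              · exact Or.inl rfl
          rw [key]
          exact pair_univ_mem hP hA hyne
        · obtain ⟨x0, hx0B, hx0u⟩ : ∃ x0, x0 ∈ (↑B : Set (Finset (Fin n))) ∧ x0 ≠ Finset.univ := by
            by_contra h
            push_neg at h
            exact hBu fun x hx => Set.mem_singleton_iff.mpr (h x hx)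
          have hMW : insert Finset.univ (↑(insert y B) : Set (Finset (Fin n)))
              = insert Finset.univ (↑B : Set (Finset (Fin n))) ∪ {y, Finset.univ} := by
            rw [hcoe]
            ext x
            simp only [Set.mem_insert_iff, Set.mem_union, Set.mem_singleton_iff]
            tauto
          rw [hMW]
          have hyB : y ∉ (↑B : Set (Finset (Fin n))) := hy
          refine (hP.2.2 _ (ih hBsub) _ (pair_univ_mem hP hA hyne)
            ⟨⟨Finset.univ, Or.inl rfl, Or.inr rfl⟩, ?_, ?_⟩).2.1
          · intro hsub2
            have hx0M : x0 ∈ insert Finset.univ (↑B : Set (Finset (Fin n))) := Or.inr hx0B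
            rcases hsub2 hx0M with h | h
            · exact absurd h (fun hh => hy (hh ▸ hx0B))
            · exact hx0u h
          · intro hsub2
            have hyW : y ∈ ({y, Finset.univ} : Set (Finset (Fin n))) := Or.inl rfl
            rcases hsub2 hyW with h | h
            · exact hyu h
            · exact hyB h

lemma subsetS_mem (hP : IsPatchwork P) (hA : ∀ i, Agen n i ∈ P) (hn : n ≠ 2)
    (B : Set (Finset (Fin n))) (hB : B ⊆ {x | x ≠ ∅}) : B ∈ P := by
  by_cases hBe : B = ∅
  · rw [hBe]; exact hP.1
  · obtain ⟨b0, hb0⟩ := Set.nonempty_iff_ne_empty.mpr hBe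
    have hb0ne : b0 ≠ ∅ := hB hb0
    obtain ⟨i0, -⟩ := Finset.nonempty_iff_ne_empty.mpr hb0ne
    have hn1 : 1 ≤ n := i0.pos
    have hBfin : B.Finite := Set.toFinite B
    have hcoe : (↑hBfin.toFinset : Set (Finset (Fin n))) = B := hBfin.coe_toFinset
    have hInsert : insert Finset.univ B ∈ P := by
      rw [← hcoe]
      exact insertUniv_mem hP hA hn1 hBfin.toFinset (by rw [hcoe]; exact hB)
    by_cases hu : Finset.univ ∈ B
    · rwa [Set.insert_eq_self.mpr hu] at hInsert
    · by_cases hw : ∃ w : Finset (Fin n), w ≠ ∅ ∧ w ∉ B ∧ w ≠ Finset.univ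
      · obtain ⟨w, hwne, hwB, hwu⟩ := hw
        have hwpair : ({w, Finset.univ} : Set (Finset (Fin n))) ∈ P :=
          pair_univ_mem hP hA (Finset.nonempty_iff_ne_empty.mpr hwne)
        have hkey : B = insert Finset.univ B \ {w, Finset.univ} := by
          ext x
          simp only [Set.mem_diff, Set.mem_insert_iff, Set.mem_singleton_iff]
          constructor
          · intro hx
            refine ⟨Or.inr hx, ?_⟩
            push_neg
            exact ⟨fun h => hwB (h ▸ hx), fun h => hu (h ▸ hx)⟩
          · rintro ⟨(rfl | hx), h2⟩
            · push_neg at h2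
              exact absurd rfl h2.2
            · exact hx
        rw [hkey]
        refine (hP.2.2 _ hInsert _ hwpair
          ⟨⟨Finset.univ, Or.inl rfl, Or.inr rfl⟩, ?_, ?_⟩).2.2
        · intro hsub
          rcases hsub (Or.inr hb0 : b0 ∈ insert Finset.univ B) with h | h
          · exact hwB (h ▸ hb0)
          · exact hu (h ▸ hb0)
        · intro hsub
          rcases hsub (Or.inl rfl : w ∈ ({w, Finset.univ} : Set (Finset (Fin n)))) with h | h
          · exact hwu h
          · exact hwB h
      · push_neg at hw
        have hkey : B = {x : Finset (Fin n) | x ≠ ∅ ∧ x ≠ Finset.univ} := by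
          ext x
          simp only [Set.mem_setOf_eq]
          constructor
          · intro hx
            exact ⟨hB hx, fun h => hu (h ▸ hx)⟩
          · rintro ⟨h1, h2⟩
            by_contra hxB
            exact h2 (hw x (Finset.nonempty_iff_ne_empty.mpr h1) hxB)
        rw [hkey]
        exact Tmem hP hA hn

private theorem statement16' (n : ℕ) (hn : n ≠ 2) :
    ∃ (Ω : Type) (C : Set (Set Ω)), C.encard = (n : ℕ∞) ∧
      (patchworkClosure C).encard = ((2 ^ (2 ^ n - 1) + 1 : ℕ) : ℕ∞) := by
  refine ⟨Finset (Fin n), Set.range (Agen n), ?_, ?_⟩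
  · -- cardinality of the generating family
    have hinj : Function.Injective (Agen n) := by
      intro i j h
      have hi : ({i} : Finset (Fin n)) ∈ Agen n i := Finset.mem_singleton_self i
      rw [h] at hi
      exact (Finset.mem_singleton.mp hi).symm
    rw [← Set.image_univ, hinj.encard_image, Set.encard_univ]
    simp
  · set Sset : Set (Finset (Fin n)) := {x | x ≠ ∅} with hSdef
    set Pow : Set (Set (Finset (Fin n))) := {B | B ⊆ Sset} with hPowdef
    set Pbig : Set (Set (Finset (Fin n))) := insert Set.univ Pow with hPbigdef
    have hunivPow : Set.univ ∉ Pow := by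
      intro h
      have : (∅ : Finset (Fin n)) ∈ Sset := h (Set.mem_univ _)
      exact this rfl
    have hPatch : IsPatchwork Pbig := by
      refine ⟨Or.inr (by intro x hx; exact absurd hx (Set.notMem_empty x)), Or.inl rfl, ?_⟩
      rintro A hA B hB hov
      rcases hA with rfl | hA
      · exact absurd (Set.subset_univ B) hov.2.2
      rcases hB with rfl | hB
      · exact absurd (Set.subset_univ A) hov.2.1
      exact ⟨Or.inr fun x hx => hA hx.1, Or.inr fun x hx => hx.elim (fun h => hA h) (fun h => hB h),
        Or.inr fun x hx => hA hx.1⟩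
    have hCsub : Set.range (Agen n) ⊆ Pbig := by
      rintro A ⟨i, rfl⟩
      refine Or.inr fun x hx => ?_
      intro hxe
      rw [hxe] at hx
      exact absurd hx (Finset.notMem_empty i)
    have hQ : patchworkClosure (Set.range (Agen n)) = Pbig := by
      apply Set.Subset.antisymm
      · exact closure_subset hPatch hCsub
      · have hPq : IsPatchwork (patchworkClosure (Set.range (Agen n))) :=
          isPatchwork_closure _
        have hAq : ∀ i, Agen n i ∈ patchworkClosure (Set.range (Agen n)) :=
          fun i => subset_pclosure _ ⟨i, rfl⟩
        rintro B (rfl | hB)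
        · exact hPq.2.1
        · exact subsetS_mem hPq hAq hn B hB
    rw [hQ]
    -- now count
    classical
    set sF : Finset (Finset (Fin n)) := Finset.univ.erase ∅ with hsFdef
    have hSF : Sset = ↑sF := by
      ext x
      simp [hSdef, hsFdef]
    have hPowFin : Pow = (fun t : Finset (Finset (Fin n)) => (↑t : Set (Finset (Fin n)))) ''
        ↑(sF.powerset) := by
      ext B
      constructor
      · intro hBsub
        have hBfin : B.Finite := Set.toFinite B
        refine ⟨hBfin.toFinset, ?_, hBfin.coe_toFinset⟩
        rw [Finset.mem_coe, Finset.mem_powerset, ← Finset.coe_subset, hBfin.coe_toFinset, ← hSF]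
        exact hBsub
      · rintro ⟨t, ht, rfl⟩
        rw [Finset.mem_coe, Finset.mem_powerset] at ht
        have : (↑t : Set (Finset (Fin n))) ⊆ Sset := by
          rw [hSF]
          exact Finset.coe_subset.mpr ht
        exact this
    have hPowCard : Pow.encard = ((2 ^ (2 ^ n - 1) : ℕ) : ℕ∞) := by
      rw [hPowFin, Finset.coe_injective.encard_image, Set.encard_coe_eq_coe_finsetCard]
      congr 1
      rw [Finset.card_powerset]
      congr 1
      rw [hsFdef, Finset.card_erase_of_mem (Finset.mem_univ _), Finset.card_univ,
        Fintype.card_finset, Fintype.card_fin]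
    rw [hPbigdef, Set.encard_insert_of_notMem hunivPow, hPowCard]
    push_cast
    ring

theorem statement16 (n : ℕ) (hn : n ≠ 2) :
    ∃ (Ω : Type) (C : Set (Set Ω)), C.encard = (n : ℕ∞) ∧
      (patchworkClosure C).encard = ((2 ^ (2 ^ n - 1) + 1 : ℕ) : ℕ∞) := by
  exact statement16' n hn
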